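/- With f(θ) = (1/240)(160 - 60cos θ - 96cos 2θ - 4cos 3θ) and p(θ) = 2 - 2cos θ, the ratio f(θ)/p(θ) extends continuously to θ = 0 with limit 1, equals 2/15 at θ = π, and is monotonically decreasing on [0,π]; in particular 2/15 ≤ f(θ)/p(θ) ≤ 1 for θ ∈ (0,π]. -/
import Mathlib


open Real

/-- The IgA symbol `f(θ) = (1/240)(160 - 60 cos θ - 96 cos 2θ - 4 cos 3θ)`. -/
noncomputable def fIgA (θ : ℝ) : ℝ :=
  (1 / 240) * (160 - 60 * Real.cos θ - 96 * Real.cos (2 * θ) - 4 * Real.cos (3 * θ))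

/-- The preconditioner symbol `p(θ) = 2 - 2 cos θ`. -/
noncomputable def pLap (θ : ℝ) : ℝ := 2 - 2 * Real.cos θ

noncomputable def gAux (θ : ℝ) : ℝ := (Real.cos θ ^ 2 + 13 * Real.cos θ + 16) / 30

lemma fIgA_eq (θ : ℝ) : fIgA θ = pLap θ * gAux θ := by
  unfold fIgA pLap gAux
  rw [Real.cos_two_mul, Real.cos_three_mul]
  ring

lemma div_eq_gAux {θ : ℝ} (h : Real.cos θ ≠ 1) : fIgA θ / pLap θ = gAux θ := by
  have hp : pLap θ ≠ 0 := by
    unfold pLap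
    intro hc
    apply h
    linarith [hc]
  rw [fIgA_eq]
  exact mul_div_cancel_left₀ _ hp

lemma cos_ne_one_of_Ioc {θ : ℝ} (hθ : θ ∈ Set.Ioc 0 π) : Real.cos θ ≠ 1 := by
  intro hc
  rw [Real.cos_eq_one_iff_of_lt_of_lt (by linarith [hθ.1, Real.pi_pos])
    (by linarith [hθ.2, Real.pi_pos])] at hc
  exact (ne_of_gt hθ.1) hc

/-- `f/p` tends to `1` at `0`, equals `2/15` at `π`, is monotonically decreasing on
`(0, π]`, and satisfies `2/15 ≤ f/p ≤ 1` there. -/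
theorem fIgA_div_pLap_properties :
    Filter.Tendsto (fun θ => fIgA θ / pLap θ) (nhdsWithin 0 {(0:ℝ)}ᶜ) (nhds 1) ∧
    fIgA π / pLap π = 2 / 15 ∧
    AntitoneOn (fun θ => fIgA θ / pLap θ) (Set.Ioc 0 π) ∧
    ∀ θ ∈ Set.Ioc (0:ℝ) π, 2 / 15 ≤ fIgA θ / pLap θ ∧ fIgA θ / pLap θ ≤ 1 := by
  have pi_pos := Real.pi_pos
  refine ⟨?_, ?_, ?_, ?_⟩
  · have hg : Filter.Tendsto gAux (nhdsWithin 0 {(0:ℝ)}ᶜ) (nhds 1) := by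
      have hc : Continuous gAux := by
        unfold gAux
        fun_prop
      have h := (hc.tendsto 0).mono_left (nhdsWithin_le_nhds (s := {(0:ℝ)}ᶜ))
      norm_num [gAux] at h; exact h
    refine hg.congr' ?_
    have hmem : Set.Ioo (-(2*π)) (2*π) ∈ nhdsWithin (0:ℝ) {(0:ℝ)}ᶜ :=
      nhdsWithin_le_nhds (Ioo_mem_nhds (by linarith) (by linarith))
    filter_upwards [hmem, self_mem_nhdsWithin] with θ h1 h2
    refine (div_eq_gAux ?_).symm
    intro hc
    rw [Real.cos_eq_one_iff_of_lt_of_lt h1.1 h1.2] at hc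
    exact h2 hc
  · rw [div_eq_gAux (by simp [Real.cos_pi]; norm_num)]
    simp [gAux, Real.cos_pi]
    norm_num
  · intro a ha b hb hab
    simp only
    rw [div_eq_gAux (cos_ne_one_of_Ioc ha), div_eq_gAux (cos_ne_one_of_Ioc hb)]
    have hcos : Real.cos b ≤ Real.cos a :=
      Real.cos_le_cos_of_nonneg_of_le_pi (le_of_lt ha.1) hb.2 hab
    have hb1 : -1 ≤ Real.cos b := Real.neg_one_le_cos b
    have ha1 : Real.cos a ≤ 1 := Real.cos_le_one a
    unfold gAux
    nlinarith
  · intro θ hθ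
    rw [div_eq_gAux (cos_ne_one_of_Ioc hθ)]
    have h1 : -1 ≤ Real.cos θ := Real.neg_one_le_cos θ
    have h2 : Real.cos θ ≤ 1 := Real.cos_le_one θ
    unfold gAux
    constructor <;> nlinarith
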